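/- arXiv:2112.05403 — 2 statements merged into one kernel-verified Lean document; each statement's English description precedes it below -/
import Mathlib

section
/- Let G be a bipartite (multi)graph with exactly k·p edges in which every vertex has degree at most k. Then the edge set of G can be partitioned into k matchings each of cardinality exactly p. -/
open Finset

-- helper: subtype-over-sum equiv and filter card split
def sumSubtypeEquiv {α β : Type*} (P : α ⊕ β → Prop) :
    {z : α ⊕ β // P z} ≃ {a // P (Sum.inl a)} ⊕ {b // P (Sum.inr b)} where
  toFun z := match z with
    | ⟨.inl a, h⟩ => .inl ⟨a, h⟩
    | ⟨.inr b, h⟩ => .inr ⟨b, h⟩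
  invFun := Sum.elim (fun a => ⟨.inl a.1, a.2⟩) (fun b => ⟨.inr b.1, b.2⟩)
  left_inv := by rintro ⟨a | b, h⟩ <;> rfl
  right_inv := by rintro (a | b) <;> rfl

lemma filter_sum_card {α β : Type*} [Fintype α] [Fintype β] (P : α ⊕ β → Prop)
    [DecidablePred P] :
    (univ.filter P).card
      = (univ.filter fun a => P (Sum.inl a)).card
        + (univ.filter fun b => P (Sum.inr b)).card := by
  classical
  rw [← Fintype.card_subtype, ← Fintype.card_subtype, ← Fintype.card_subtype,
    ← Fintype.card_sum]
  exact Fintype.card_congr (sumSubtypeEquiv P)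

lemma card_filter_equiv {α β : Type*} [Fintype α] [Fintype β] (e : α ≃ β) (P : β → Prop)
    [DecidablePred P] :
    (univ.filter fun x => P (e x)).card = (univ.filter P).card := by
  rw [← Fintype.card_subtype, ← Fintype.card_subtype]
  exact Fintype.card_congr (e.subtypeEquiv fun x => Iff.rfl)

lemma card_prod_fiber {m n : ℕ} (i : Fin m) :
    (univ.filter fun q : Fin m × Fin n => q.1 = i).card = n := by
  have : (univ.filter fun q : Fin m × Fin n => q.1 = i) = {i} ×ˢ univ := by
    ext q
    simp only [Finset.mem_filter, Finset.mem_univ, true_and, Finset.mem_product,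
      Finset.mem_singleton]
    constructor
    · rintro rfl; exact ⟨rfl, trivial⟩
    · rintro ⟨h, -⟩; exact h
  rw [this, Finset.card_product]; simp

def sigmaFiberEquiv' {X : Type*} (n : X → Type*) (x0 : X) :
    {d : (x : X) × n x // d.1 = x0} ≃ n x0 where
  toFun d := d.2 ▸ d.1.2
  invFun j := ⟨⟨x0, j⟩, rfl⟩
  left_inv := by rintro ⟨⟨x, j⟩, rfl⟩; rfl
  right_inv j := rfl

lemma card_sigma_fiber {X : Type*} [Fintype X] [DecidableEq X] (n : X → ℕ) (x0 : X) :
    (univ.filter fun d : (x : X) × Fin (n x) => d.1 = x0).card = n x0 := by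
  rw [← Fintype.card_subtype]
  rw [Fintype.card_congr (sigmaFiberEquiv' (fun x => Fin (n x)) x0)]
  simp

lemma all_eq_of_le_of_sum {k m : ℕ} (f : Fin k → ℕ) (h : ∀ j, f j ≤ m)
    (hs : ∑ j, f j = k * m) : ∀ j, f j = m := by
  intro j
  by_contra hne
  have hlt : f j < m := lt_of_le_of_ne (h j) hne
  have : ∑ i, f i < ∑ _i : Fin k, m :=
    Finset.sum_lt_sum (fun i _ => h i) ⟨j, Finset.mem_univ j, hlt⟩
  simp [Finset.sum_const, mul_comm] at this
  omega

lemma all_eq_of_ge_of_sum {k m : ℕ} (f : Fin k → ℕ) (h : ∀ j, m ≤ f j)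
    (hs : ∑ j, f j = k * m) : ∀ j, f j = m := by
  intro j
  by_contra hne
  have hlt : m < f j := lt_of_le_of_ne (h j) (Ne.symm hne)
  have : ∑ _i : Fin k, m < ∑ i, f i :=
    Finset.sum_lt_sum (fun i _ => h i) ⟨j, Finset.mem_univ j, hlt⟩
  simp [Finset.sum_const, mul_comm] at this
  omega

lemma hall_step {F X Y : Type*} [Fintype F] [Fintype X] [Fintype Y]
    [DecidableEq F] [DecidableEq X] [DecidableEq Y]
    (k : ℕ) (hk : 0 < k) (a : F → X) (b : F → Y) (s : Finset F)
    (ha : ∀ x, (s.filter fun e => a e = x).card = k)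
    (hb : ∀ y, (s.filter fun e => b e = y).card = k) :
    ∃ m : X → F, (∀ x, m x ∈ s) ∧ (∀ x, a (m x) = x) ∧ Function.Injective (b ∘ m) := by
  classical
  set t : X → Finset Y := fun x => (s.filter fun e => a e = x).image b with ht
  have hall : ∀ u : Finset X, u.card ≤ (u.biUnion t).card := by
    intro u
    set Es := s.filter fun e => a e ∈ u with hEs
    have h1 : Es.card = ∑ x ∈ u, k := by
      rw [Finset.card_eq_sum_card_fiberwise (f := a) (s := Es) (t := u)
        (fun e he => (Finset.mem_filter.mp he).2)]
      refine Finset.sum_congr rfl fun x hx => ?_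
      rw [← ha x]
      congr 1
      ext e
      constructor
      · intro he
        have h1 := Finset.mem_filter.mp he
        have h2 := Finset.mem_filter.mp h1.1
        exact Finset.mem_filter.mpr ⟨h2.1, h1.2⟩
      · intro he
        have h1 := Finset.mem_filter.mp he
        exact Finset.mem_filter.mpr ⟨Finset.mem_filter.mpr ⟨h1.1, h1.2 ▸ hx⟩, h1.2⟩
    have h2 : Es.card ≤ ∑ _y ∈ u.biUnion t, k := by
      rw [Finset.card_eq_sum_card_fiberwise (f := b) (t := u.biUnion t)
        (fun e he => by
          refine Finset.mem_biUnion.mpr ⟨a e, (Finset.mem_filter.mp he).2, ?_⟩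
          exact Finset.mem_image.mpr ⟨e, Finset.mem_filter.mpr
            ⟨(Finset.mem_filter.mp he).1, rfl⟩, rfl⟩)]
      refine Finset.sum_le_sum fun y _ => ?_
      rw [← hb y]
      apply Finset.card_le_card
      intro e he
      have h1 := Finset.mem_filter.mp he
      have h2 := Finset.mem_filter.mp h1.1
      exact Finset.mem_filter.mpr ⟨h2.1, h1.2⟩
    rw [Finset.sum_const, smul_eq_mul] at h1 h2
    rw [h1] at h2
    exact Nat.le_of_mul_le_mul_right h2 hk
  obtain ⟨f, hfinj, hft⟩ := (Finset.all_card_le_biUnion_card_iff_exists_injective t).mp hall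
  have : ∀ x, ∃ e, e ∈ s ∧ a e = x ∧ b e = f x := by
    intro x
    obtain ⟨e, he, hbe⟩ := Finset.mem_image.mp (hft x)
    obtain ⟨hes, hae⟩ := Finset.mem_filter.mp he
    exact ⟨e, hes, hae, hbe⟩
  choose m hm1 hm2 hm3 using this
  refine ⟨m, hm1, hm2, ?_⟩
  have : b ∘ m = f := funext hm3
  rw [this]; exact hfinj

lemma regular_decomp {F X Y : Type*} [Fintype F] [Fintype X] [Fintype Y]
    [DecidableEq F] [DecidableEq X] [DecidableEq Y] :
    ∀ (k : ℕ) (a : F → X) (b : F → Y) (s : Finset F),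
      (∀ x, (s.filter fun e => a e = x).card = k) →
      (∀ y, (s.filter fun e => b e = y).card = k) →
      ∃ c : F → ℕ, (∀ e ∈ s, c e < k) ∧
        (∀ e ∈ s, ∀ e' ∈ s, e ≠ e' → c e = c e' → a e ≠ a e' ∧ b e ≠ b e') := by
  intro k
  induction k with
  | zero =>
    intro a b s ha hb
    refine ⟨fun _ => 0, fun e he => ?_, fun e he e' he' _ _ => ?_⟩
    all_goals {
      exfalso
      have h := ha (a e)
      have : e ∈ s.filter fun e' => a e' = a e := Finset.mem_filter.mpr ⟨he, rfl⟩
      have := Finset.card_pos.mpr ⟨e, this⟩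
      omega }
  | succ k ih =>
    intro a b s ha hb
    obtain ⟨m, hm1, hm2, hm3⟩ := hall_step (k + 1) (Nat.succ_pos k) a b s ha hb
    classical
    set M : Finset F := Finset.univ.image m with hM
    have hmemM : ∀ e, e ∈ M ↔ ∃ x, m x = e := by
      intro e; simp [hM]
    -- card X = card Y
    have hcXY : Fintype.card X = Fintype.card Y := by
      have h1 : s.card = ∑ x : X, (s.filter fun e => a e = x).card :=
        Finset.card_eq_sum_card_fiberwise (fun e _ => Finset.mem_univ (a e))
      have h2 : s.card = ∑ y : Y, (s.filter fun e => b e = y).card :=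
        Finset.card_eq_sum_card_fiberwise (fun e _ => Finset.mem_univ (b e))
      simp only [ha] at h1
      simp only [hb] at h2
      rw [Finset.sum_const, smul_eq_mul] at h1 h2
      rw [Finset.card_univ] at h1 h2
      have := h1.symm.trans h2
      exact Nat.eq_of_mul_eq_mul_right (Nat.succ_pos k) this
    have hbminj : Function.Bijective (b ∘ m) :=
      (Fintype.bijective_iff_injective_and_card (b ∘ m)).mpr ⟨hm3, hcXY⟩
    set s' := s \ M with hs'
    have ha' : ∀ x, (s'.filter fun e => a e = x).card = k := by
      intro x
      have heq : s'.filter (fun e => a e = x)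
          = (s.filter fun e => a e = x).erase (m x) := by
        ext e
        simp only [hs', Finset.mem_filter, Finset.mem_sdiff, Finset.mem_erase, hmemM]
        constructor
        · rintro ⟨⟨hes, hnM⟩, hae⟩
          exact ⟨fun h => hnM ⟨x, h.symm⟩, hes, hae⟩
        · rintro ⟨hne, hes, hae⟩
          refine ⟨⟨hes, ?_⟩, hae⟩
          rintro ⟨x', rfl⟩
          exact hne (by rw [hm2 x'] at hae; rw [hae])
      rw [heq, Finset.card_erase_of_mem (Finset.mem_filter.mpr ⟨hm1 x, hm2 x⟩), ha x]
      omega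
    have hb' : ∀ y, (s'.filter fun e => b e = y).card = k := by
      intro y
      obtain ⟨xy, hxy⟩ := hbminj.surjective y
      have heq : s'.filter (fun e => b e = y)
          = (s.filter fun e => b e = y).erase (m xy) := by
        ext e
        simp only [hs', Finset.mem_filter, Finset.mem_sdiff, Finset.mem_erase, hmemM]
        constructor
        · rintro ⟨⟨hes, hnM⟩, hbe⟩
          exact ⟨fun h => hnM ⟨xy, h.symm⟩, hes, hbe⟩
        · rintro ⟨hne, hes, hbe⟩
          refine ⟨⟨hes, ?_⟩, hbe⟩
          rintro ⟨x', rfl⟩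
          apply hne
          have : (b ∘ m) x' = (b ∘ m) xy := by
            simp only [Function.comp_apply]
            rw [hbe]
            exact hxy.symm
          rw [hm3 this]
      rw [heq, Finset.card_erase_of_mem (Finset.mem_filter.mpr ⟨hm1 xy, hxy⟩), hb y]
      omega
    obtain ⟨c', hc1', hc2'⟩ := ih a b s' ha' hb'
    refine ⟨fun e => if e ∈ M then k else c' e, ?_, ?_⟩
    · intro e he
      by_cases hEM : e ∈ M
      · simp [hEM]
      · simp only [hEM, if_false]
        exact Nat.lt_succ_of_lt (hc1' e (Finset.mem_sdiff.mpr ⟨he, hEM⟩))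
    · intro e he e' he' hne hceq
      by_cases h1 : e ∈ M <;> by_cases h2 : e' ∈ M
      · obtain ⟨x, rfl⟩ := (hmemM e).mp h1
        obtain ⟨x', rfl⟩ := (hmemM e').mp h2
        have hxx : x ≠ x' := fun h => hne (by rw [h])
        constructor
        · rw [hm2 x, hm2 x']; exact hxx
        · exact fun h => hxx (hm3 h)
      · exfalso
        simp only [h1, h2, if_true, if_false] at hceq
        have := hc1' e' (Finset.mem_sdiff.mpr ⟨he', h2⟩)
        omega
      · exfalso
        simp only [h1, h2, if_true, if_false] at hceq
        have := hc1' e (Finset.mem_sdiff.mpr ⟨he, h1⟩)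
        omega
      · simp only [h1, h2, if_false] at hceq
        exact hc2' e (Finset.mem_sdiff.mpr ⟨he, h1⟩) e'
          (Finset.mem_sdiff.mpr ⟨he', h2⟩) hne hceq

lemma decomp_count {F X Y : Type*} [Fintype F] [Fintype X] [Fintype Y]
    [DecidableEq F] [DecidableEq X] [DecidableEq Y]
    (k : ℕ) (aF : F → X) (bF : F → Y)
    (ha : ∀ x, (univ.filter fun f => aF f = x).card = k)
    (hb : ∀ y, (univ.filter fun f => bF f = y).card = k) :
    ∃ c : F → Fin k,
      (∀ f f', f ≠ f' → c f = c f' → aF f ≠ aF f' ∧ bF f ≠ bF f') ∧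
      (∀ j, (univ.filter fun f => c f = j).card = Fintype.card X) := by
  classical
  obtain ⟨c0, hlt, hprop⟩ := regular_decomp k aF bF univ ha hb
  refine ⟨fun f => ⟨c0 f, hlt f (Finset.mem_univ f)⟩, ?_, ?_⟩
  · intro f f' hne hc
    exact hprop f (Finset.mem_univ f) f' (Finset.mem_univ f') hne (by
      simpa using congrArg Fin.val hc)
  · have hle : ∀ j : Fin k,
        (univ.filter fun f => (⟨c0 f, hlt f (Finset.mem_univ f)⟩ : Fin k) = j).card
          ≤ Fintype.card X := by
      intro j
      have := Finset.card_le_card_of_injOn (f := aF)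
        (s := univ.filter fun f => (⟨c0 f, hlt f (Finset.mem_univ f)⟩ : Fin k) = j)
        (t := (univ : Finset X)) (fun _ _ => Finset.mem_univ _) ?_
      · simpa using this
      · intro f hf f' hf' heq
        by_contra hne
        have hcf := (Finset.mem_filter.mp hf).2
        have hcf' := (Finset.mem_filter.mp hf').2
        have : c0 f = c0 f' := by
          have := hcf.trans hcf'.symm
          simpa using congrArg Fin.val this
        exact (hprop f (Finset.mem_univ f) f' (Finset.mem_univ f') hne this).1 heq
    have hsumF : ∑ j : Fin k,
        (univ.filter fun f => (⟨c0 f, hlt f (Finset.mem_univ f)⟩ : Fin k) = j).card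
          = Fintype.card F := by
      rw [← Finset.card_univ]
      exact (Finset.card_eq_sum_card_fiberwise fun f _ => Finset.mem_univ _).symm
    have hFcard : Fintype.card F = k * Fintype.card X := by
      rw [← Finset.card_univ,
        Finset.card_eq_sum_card_fiberwise (f := aF) (t := univ) (fun f _ => Finset.mem_univ _)]
      simp only [ha]
      rw [Finset.sum_const, smul_eq_mul, Finset.card_univ, mul_comm]
    exact all_eq_of_le_of_sum _ hle (by rw [hsumF, hFcard])

/-- A bipartite multigraph (edges `E` with endpoint maps `a`, `b` into the two sides)
with exactly `k·p` edges and maximum degree at most `k` partitions into `k` matchings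
of cardinality exactly `p`. -/
theorem stmt4 {A B E : Type*} [Fintype E] [DecidableEq E] [DecidableEq A] [DecidableEq B]
    (a : E → A) (b : E → B) (k p : ℕ)
    (hcard : Fintype.card E = k * p)
    (hA : ∀ v : A, (Finset.univ.filter (fun e => a e = v)).card ≤ k)
    (hB : ∀ v : B, (Finset.univ.filter (fun e => b e = v)).card ≤ k) :
    ∃ M : Fin k → Finset E,
      (∀ i j, i ≠ j → Disjoint (M i) (M j)) ∧
      (Finset.univ.biUnion M = Finset.univ) ∧
      (∀ j, (M j).card = p) ∧
      (∀ j, ∀ e ∈ M j, ∀ e' ∈ M j, e ≠ e' → a e ≠ a e' ∧ b e ≠ b e') := by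
  classical
  rcases Nat.eq_zero_or_pos k with hk | hk
  · subst hk
    rw [zero_mul] at hcard
    haveI : IsEmpty E := Fintype.card_eq_zero_iff.mp hcard
    refine ⟨fun j => j.elim0, fun i => i.elim0, ?_, fun j => j.elim0, fun j => j.elim0⟩
    ext e
    exact isEmptyElim e
  -- main case
  · set Xim := Finset.univ.image a with hXim
    set Yim := Finset.univ.image b with hYim
    set da : A → ℕ := fun v => (Finset.univ.filter fun e => a e = v).card with hda
    set db : B → ℕ := fun v => (Finset.univ.filter fun e => b e = v).card with hdb
    have hAk : ∀ v, da v ≤ k := hA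
    have hBk : ∀ v, db v ≤ k := hB
    have hsumA : ∑ v ∈ Xim, da v = k * p := by
      rw [← hcard, ← Finset.card_univ]
      exact (Finset.card_eq_sum_card_fiberwise fun e _ =>
        Finset.mem_image_of_mem a (Finset.mem_univ e)).symm
    have hsumB : ∑ v ∈ Yim, db v = k * p := by
      rw [← hcard, ← Finset.card_univ]
      exact (Finset.card_eq_sum_card_fiberwise fun e _ =>
        Finset.mem_image_of_mem b (Finset.mem_univ e)).symm
    have hpX : p ≤ Xim.card := by
      have h2 : ∑ v ∈ Xim, da v ≤ Xim.card * k := by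
        calc ∑ v ∈ Xim, da v ≤ ∑ _v ∈ Xim, k := Finset.sum_le_sum fun v _ => hAk v
          _ = Xim.card * k := by rw [Finset.sum_const, smul_eq_mul]
      rw [hsumA, mul_comm Xim.card k] at h2
      exact Nat.le_of_mul_le_mul_left h2 hk
    have hpY : p ≤ Yim.card := by
      have h2 : ∑ v ∈ Yim, db v ≤ Yim.card * k := by
        calc ∑ v ∈ Yim, db v ≤ ∑ _v ∈ Yim, k := Finset.sum_le_sum fun v _ => hBk v
          _ = Yim.card * k := by rw [Finset.sum_const, smul_eq_mul]
      rw [hsumB, mul_comm Yim.card k] at h2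
      exact Nat.le_of_mul_le_mul_left h2 hk
    obtain ⟨s2, hs2⟩ : ∃ t, Xim.card = p + t := ⟨Xim.card - p, by omega⟩
    obtain ⟨s1, hs1⟩ : ∃ t, Yim.card = p + t := ⟨Yim.card - p, by omega⟩
    set n1 : ↥Yim → ℕ := fun y => k - db ↑y with hn1
    set n2 : ↥Xim → ℕ := fun x => k - da ↑x with hn2
    -- cardinalities of the dummy edge types
    have cardD1 : Fintype.card ((y : ↥Yim) × Fin (n1 y)) = s1 * k := by
      rw [Fintype.card_sigma]
      simp only [Fintype.card_fin, hn1]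
      rw [Finset.sum_coe_sort Yim (fun v => k - db v)]
      have h1 : ∑ v ∈ Yim, (k - db v) + ∑ v ∈ Yim, db v = Yim.card * k := by
        rw [← Finset.sum_add_distrib,
          Finset.sum_congr rfl fun v _ => Nat.sub_add_cancel (hBk v),
          Finset.sum_const, smul_eq_mul]
      rw [hsumB, hs1, add_mul, mul_comm p k] at h1
      exact Nat.add_right_cancel (h1.trans (Nat.add_comm _ _))
    have cardD2 : Fintype.card ((x : ↥Xim) × Fin (n2 x)) = s2 * k := by
      rw [Fintype.card_sigma]
      simp only [Fintype.card_fin, hn2]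
      rw [Finset.sum_coe_sort Xim (fun v => k - da v)]
      have h1 : ∑ v ∈ Xim, (k - da v) + ∑ v ∈ Xim, da v = Xim.card * k := by
        rw [← Finset.sum_add_distrib,
          Finset.sum_congr rfl fun v _ => Nat.sub_add_cancel (hAk v),
          Finset.sum_const, smul_eq_mul]
      rw [hsumA, hs2, add_mul, mul_comm p k] at h1
      exact Nat.add_right_cancel (h1.trans (Nat.add_comm _ _))
    have e1 : ((y : ↥Yim) × Fin (n1 y)) ≃ Fin s1 × Fin k :=
      (Fintype.equivFinOfCardEq cardD1).trans finProdFinEquiv.symm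
    have e2 : ((x : ↥Xim) × Fin (n2 x)) ≃ Fin s2 × Fin k :=
      (Fintype.equivFinOfCardEq cardD2).trans finProdFinEquiv.symm
    have fib1 : ∀ i : Fin s1,
        (Finset.univ.filter fun d : (y : ↥Yim) × Fin (n1 y) => (e1 d).1 = i).card = k :=
      fun i => (card_filter_equiv e1 (fun q => q.1 = i)).trans (card_prod_fiber i)
    have fib2 : ∀ i : Fin s2,
        (Finset.univ.filter fun d : (x : ↥Xim) × Fin (n2 x) => (e2 d).1 = i).card = k :=
      fun i => (card_filter_equiv e2 (fun q => q.1 = i)).trans (card_prod_fiber i)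
    -- the regular bipartite multigraph
    obtain ⟨c, hprop, hclass⟩ := decomp_count (F := E ⊕ (((y : ↥Yim) × Fin (n1 y)) ⊕ ((x : ↥Xim) × Fin (n2 x)))) (X := ↥Xim ⊕ Fin s1) (Y := ↥Yim ⊕ Fin s2) k
      (Sum.elim
        (fun e => Sum.inl (⟨a e, Finset.mem_image_of_mem a (Finset.mem_univ e)⟩ : ↥Xim))
        (Sum.elim (fun d => Sum.inr (e1 d).1) (fun d => Sum.inl d.1)))
      (Sum.elim
        (fun e => Sum.inl (⟨b e, Finset.mem_image_of_mem b (Finset.mem_univ e)⟩ : ↥Yim))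
        (Sum.elim (fun d => Sum.inl d.1) (fun d => Sum.inr (e2 d).1)))
      (by
        intro x
        rw [filter_sum_card, filter_sum_card]
        simp only [Sum.elim_inl, Sum.elim_inr]
        match x with
        | Sum.inl x0 =>
          have hE : (Finset.univ.filter fun e : E =>
              (Sum.inl (⟨a e, Finset.mem_image_of_mem a (Finset.mem_univ e)⟩ : ↥Xim)
                : ↥Xim ⊕ Fin s1) = Sum.inl x0).card = da ↑x0 := by
            rw [hda]
            congr 1
            ext e
            simp [Subtype.ext_iff]
          have hD1 : (Finset.univ.filter fun d : (y : ↥Yim) × Fin (n1 y) =>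
              (Sum.inr (e1 d).1 : ↥Xim ⊕ Fin s1) = Sum.inl x0).card = 0 := by
            rw [Finset.card_eq_zero]
            ext d
            simp
          have hD2 : (Finset.univ.filter fun d : (x : ↥Xim) × Fin (n2 x) =>
              (Sum.inl d.1 : ↥Xim ⊕ Fin s1) = Sum.inl x0).card = k - da ↑x0 := by
            have : (Finset.univ.filter fun d : (x : ↥Xim) × Fin (n2 x) =>
                (Sum.inl d.1 : ↥Xim ⊕ Fin s1) = Sum.inl x0)
                = Finset.univ.filter fun d : (x : ↥Xim) × Fin (n2 x) => d.1 = x0 := by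
              ext d; simp
            rw [this, card_sigma_fiber n2 x0, hn2]
          erw [hE, hD1, hD2]
          have := hAk ↑x0
          omega
        | Sum.inr i =>
          have hE : (Finset.univ.filter fun e : E =>
              (Sum.inl (⟨a e, Finset.mem_image_of_mem a (Finset.mem_univ e)⟩ : ↥Xim)
                : ↥Xim ⊕ Fin s1) = Sum.inr i).card = 0 := by
            rw [Finset.card_eq_zero]
            ext e
            simp
          have hD1 : (Finset.univ.filter fun d : (y : ↥Yim) × Fin (n1 y) =>
              (Sum.inr (e1 d).1 : ↥Xim ⊕ Fin s1) = Sum.inr i).card = k := by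
            have : (Finset.univ.filter fun d : (y : ↥Yim) × Fin (n1 y) =>
                (Sum.inr (e1 d).1 : ↥Xim ⊕ Fin s1) = Sum.inr i)
                = Finset.univ.filter fun d : (y : ↥Yim) × Fin (n1 y) => (e1 d).1 = i := by
              ext d; simp
            rw [this]
            exact fib1 i
          have hD2 : (Finset.univ.filter fun d : (x : ↥Xim) × Fin (n2 x) =>
              (Sum.inl d.1 : ↥Xim ⊕ Fin s1) = Sum.inr i).card = 0 := by
            rw [Finset.card_eq_zero]
            ext d
            simp
          erw [hE, hD1, hD2]
          omega)
      (by
        intro y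
        rw [filter_sum_card, filter_sum_card]
        simp only [Sum.elim_inl, Sum.elim_inr]
        match y with
        | Sum.inl y0 =>
          have hE : (Finset.univ.filter fun e : E =>
              (Sum.inl (⟨b e, Finset.mem_image_of_mem b (Finset.mem_univ e)⟩ : ↥Yim)
                : ↥Yim ⊕ Fin s2) = Sum.inl y0).card = db ↑y0 := by
            rw [hdb]
            congr 1
            ext e
            simp [Subtype.ext_iff]
          have hD1 : (Finset.univ.filter fun d : (y : ↥Yim) × Fin (n1 y) =>
              (Sum.inl d.1 : ↥Yim ⊕ Fin s2) = Sum.inl y0).card = k - db ↑y0 := by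
            have : (Finset.univ.filter fun d : (y : ↥Yim) × Fin (n1 y) =>
                (Sum.inl d.1 : ↥Yim ⊕ Fin s2) = Sum.inl y0)
                = Finset.univ.filter fun d : (y : ↥Yim) × Fin (n1 y) => d.1 = y0 := by
              ext d; simp
            rw [this, card_sigma_fiber n1 y0, hn1]
          have hD2 : (Finset.univ.filter fun d : (x : ↥Xim) × Fin (n2 x) =>
              (Sum.inr (e2 d).1 : ↥Yim ⊕ Fin s2) = Sum.inl y0).card = 0 := by
            rw [Finset.card_eq_zero]
            ext d
            simp
          erw [hE, hD1, hD2]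
          have := hBk ↑y0
          omega
        | Sum.inr i =>
          have hE : (Finset.univ.filter fun e : E =>
              (Sum.inl (⟨b e, Finset.mem_image_of_mem b (Finset.mem_univ e)⟩ : ↥Yim)
                : ↥Yim ⊕ Fin s2) = Sum.inr i).card = 0 := by
            rw [Finset.card_eq_zero]
            ext e
            simp
          have hD1 : (Finset.univ.filter fun d : (y : ↥Yim) × Fin (n1 y) =>
              (Sum.inl d.1 : ↥Yim ⊕ Fin s2) = Sum.inr i).card = 0 := by
            rw [Finset.card_eq_zero]
            ext d
            simp
          have hD2 : (Finset.univ.filter fun d : (x : ↥Xim) × Fin (n2 x) =>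
              (Sum.inr (e2 d).1 : ↥Yim ⊕ Fin s2) = Sum.inr i).card = k := by
            have : (Finset.univ.filter fun d : (x : ↥Xim) × Fin (n2 x) =>
                (Sum.inr (e2 d).1 : ↥Yim ⊕ Fin s2) = Sum.inr i)
                = Finset.univ.filter fun d : (x : ↥Xim) × Fin (n2 x) => (e2 d).1 = i := by
              ext d; simp
            rw [this]
            exact fib2 i
          erw [hE, hD1, hD2]
          omega)
    -- extract the matchings
    refine ⟨fun j => Finset.univ.filter fun e : E => c (Sum.inl e) = j, ?_, ?_, ?_, ?_⟩
    · intro i j hij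
      rw [Finset.disjoint_left]
      intro e hei hej
      exact hij (((Finset.mem_filter.mp hei).2.symm.trans (Finset.mem_filter.mp hej).2))
    · ext e
      simp only [Finset.mem_biUnion, Finset.mem_univ, iff_true]
      exact ⟨c (Sum.inl e), by simp⟩
    · -- cardinality count
      have hsplit : ∀ j : Fin k,
          (Finset.univ.filter fun f : E ⊕ (((y : ↥Yim) × Fin (n1 y)) ⊕ ((x : ↥Xim) × Fin (n2 x))) => c f = j).card
            = (Finset.univ.filter fun e : E => c (Sum.inl e) = j).card
              + ((Finset.univ.filter fun d : (y : ↥Yim) × Fin (n1 y) => c (Sum.inr (Sum.inl d)) = j).card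
                + (Finset.univ.filter fun d : (x : ↥Xim) × Fin (n2 x) => c (Sum.inr (Sum.inr d)) = j).card) := by
        intro j
        rw [filter_sum_card, filter_sum_card]
      have hd1 : ∀ j : Fin k,
          (Finset.univ.filter fun d : (y : ↥Yim) × Fin (n1 y) => c (Sum.inr (Sum.inl d)) = j).card ≤ s1 := by
        intro j
        have := Finset.card_le_card_of_injOn (f := fun d => (e1 d).1)
          (s := Finset.univ.filter fun d : (y : ↥Yim) × Fin (n1 y) => c (Sum.inr (Sum.inl d)) = j)
          (t := (Finset.univ : Finset (Fin s1))) (fun _ _ => Finset.mem_univ _) ?_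
        · simpa using this
        · intro d hd d' hd' heq
          by_contra hne
          have hcd := (Finset.mem_filter.mp hd).2
          have hcd' := (Finset.mem_filter.mp hd').2
          have h := hprop (Sum.inr (Sum.inl d)) (Sum.inr (Sum.inl d'))
            (by simp [hne]) (hcd.trans hcd'.symm)
          simp only [Sum.elim_inl, Sum.elim_inr] at h
          exact h.1 (congrArg Sum.inr heq)
      have hd2 : ∀ j : Fin k,
          (Finset.univ.filter fun d : (x : ↥Xim) × Fin (n2 x) => c (Sum.inr (Sum.inr d)) = j).card ≤ s2 := by
        intro j
        have := Finset.card_le_card_of_injOn (f := fun d => (e2 d).1)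
          (s := Finset.univ.filter fun d : (x : ↥Xim) × Fin (n2 x) => c (Sum.inr (Sum.inr d)) = j)
          (t := (Finset.univ : Finset (Fin s2))) (fun _ _ => Finset.mem_univ _) ?_
        · simpa using this
        · intro d hd d' hd' heq
          by_contra hne
          have hcd := (Finset.mem_filter.mp hd).2
          have hcd' := (Finset.mem_filter.mp hd').2
          have h := hprop (Sum.inr (Sum.inr d)) (Sum.inr (Sum.inr d'))
            (by simp [hne]) (hcd.trans hcd'.symm)
          simp only [Sum.elim_inl, Sum.elim_inr] at h
          exact h.2 (congrArg Sum.inr heq)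
      have hXcard : Fintype.card (↥Xim ⊕ Fin s1) = p + s2 + s1 := by
        rw [Fintype.card_sum, Fintype.card_coe, Fintype.card_fin, hs2]
      have hge : ∀ j : Fin k, p ≤ (Finset.univ.filter fun e : E => c (Sum.inl e) = j).card := by
        intro j
        have h1 := hsplit j
        rw [hclass j, hXcard] at h1
        have h2 := hd1 j
        have h3 := hd2 j
        omega
      have hsum : ∑ j : Fin k, (Finset.univ.filter fun e : E => c (Sum.inl e) = j).card = k * p := by
        rw [← hcard, ← Finset.card_univ]
        exact (Finset.card_eq_sum_card_fiberwise fun e _ => Finset.mem_univ _).symm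
      exact all_eq_of_ge_of_sum _ hge hsum
    · intro j e he e' he' hne
      have hce := (Finset.mem_filter.mp he).2
      have hce' := (Finset.mem_filter.mp he').2
      have h := hprop (Sum.inl e) (Sum.inl e') (by simp [hne]) (hce.trans hce'.symm)
      simp only [Sum.elim_inl] at h
      constructor
      · intro hae
        exact h.1 (by simp [Subtype.ext_iff, hae])
      · intro hbe
        exact h.2 (by simp [Subtype.ext_iff, hbe])
end

section
/- Let D = (V,E) be a directed graph, s, t ∈ V with s ≠ t. Construct D' from D by adding a new directed path P from s to t of length |V| through |V| − 1 new internal vertices. Then D has a Hamiltonian path from s to t if and only if D' contains two st-paths P₁, P₂, each of length at most |V| (counting unit edge lengths), with |E(P₁) △ E(P₂)| ≥ 2|V| − 1. -/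
open scoped symmDiff

/-- A (simple) directed path on edge set `E` from `s` to `t`, as a vertex list. -/
def IsPathOn {V : Type*} (E : Set (V × V)) (s t : V) (vs : List V) : Prop :=
  vs.Chain' (fun x y => (x, y) ∈ E) ∧ vs.head? = some s ∧ vs.getLast? = some t ∧ vs.Nodup

/-- The list of directed edges of a vertex list. -/
def edgeList {V : Type*} (vs : List V) : List (V × V) := vs.zip vs.tail

/-- The edge set of the augmented graph `D'`: the edges of `D` together with a new
`st`-path of `|V|` unit-length edges through `|V| − 1` fresh internal vertices. -/
def augEdges {V : Type*} [Fintype V] (E : Set (V × V)) (s t : V) :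
    Set ((V ⊕ Fin (Fintype.card V - 1)) × (V ⊕ Fin (Fintype.card V - 1))) :=
  {e | (∃ u v, (u, v) ∈ E ∧ e = (Sum.inl u, Sum.inl v)) ∨
       (∃ i : Fin (Fintype.card V - 1), (i : ℕ) = 0 ∧ e = (Sum.inl s, Sum.inr i)) ∨
       (∃ i j : Fin (Fintype.card V - 1), (j : ℕ) = (i : ℕ) + 1 ∧
          e = (Sum.inr i, Sum.inr j)) ∨
       (∃ i : Fin (Fintype.card V - 1), (i : ℕ) = Fintype.card V - 2 ∧
          e = (Sum.inr i, Sum.inl t))}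

set_option linter.unusedSectionVars false
namespace SD8
variable {V : Type*} {W : Type*}

lemma head?_getElem {l : List V} {a : V} (h : l.head? = some a) :
    ∃ h0 : 0 < l.length, l[0] = a := by
  cases l with
  | nil => simp at h
  | cons x xs => simp at h; exact ⟨by simp, h⟩

lemma getLast?_getElem {l : List V} {a : V} (h : l.getLast? = some a) :
    ∃ h0 : 0 < l.length, l[l.length - 1] = a := by
  have hne : l ≠ [] := by rintro rfl; simp at h
  refine ⟨List.length_pos_iff.mpr hne, ?_⟩
  rw [List.getLast?_eq_getLast hne] at h
  rw [← List.getLast_eq_getElem hne]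
  exact Option.some_injective _ h

lemma chain'_getElem {R : V → V → Prop} {l : List V} (hc : l.Chain' R)
    (i : ℕ) (h : i + 1 < l.length) : R (l[i]'(by omega)) (l[i+1]'h) := by
  simp only [List.Chain', List.isChain_iff_getElem] at hc
  exact hc i (by omega)

lemma chain'_of_getElem {R : V → V → Prop} {l : List V}
    (H : ∀ (i : ℕ) (h : i + 1 < l.length), R (l[i]'(by omega)) (l[i+1]'h)) : l.Chain' R := by
  simp only [List.Chain', List.isChain_iff_getElem]
  intro i h
  exact H i (by omega)

lemma edgeList_length (vs : List V) : (edgeList vs).length = vs.length - 1 := by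
  simp [edgeList]

lemma mem_edgeList {vs : List V} {e : V × V} :
    e ∈ edgeList vs ↔ ∃ i, ∃ h : i + 1 < vs.length, e = (vs[i]'(by omega), vs[i+1]'h) := by
  rw [edgeList, List.mem_iff_getElem]
  constructor
  · rintro ⟨i, hi, rfl⟩
    have hi' : i + 1 < vs.length := by
      simp [List.length_zip, List.length_tail] at hi; omega
    exact ⟨i, hi', by simp [List.getElem_zip, List.getElem_tail]⟩
  · rintro ⟨i, hi, rfl⟩
    refine ⟨i, by simp [List.length_zip, List.length_tail]; omega, ?_⟩
    simp [List.getElem_zip, List.getElem_tail]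

lemma edgeList_nodup {vs : List V} (h : vs.Nodup) : (edgeList vs).Nodup := by
  have h2 : (List.map Prod.snd (edgeList vs)).Nodup := by
    rw [edgeList, List.map_snd_zip (by simp [List.length_tail])]
    exact h.tail
  exact List.Nodup.of_map _ h2

lemma edgeList_map (f : V → W) (vs : List V) :
    edgeList (vs.map f) = (edgeList vs).map (Prod.map f f) := by
  rw [edgeList, edgeList, ← List.map_tail, List.zip_map]

def newPath (s t : V) (m : ℕ) : List (V ⊕ Fin m) :=
  (Sum.inl s :: (List.finRange m).map Sum.inr) ++ [Sum.inl t]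

lemma newPath_length (s t : V) (m : ℕ) : (newPath s t m).length = m + 2 := by
  simp [newPath]

lemma newPath_getElem (s t : V) (m : ℕ) (i : ℕ) (h : i < m + 2) :
    (newPath s t m)[i]'(by rw [newPath_length]; exact h) =
      if h0 : i = 0 then Sum.inl s
      else if hi : i < m + 1 then Sum.inr ⟨i - 1, by omega⟩
      else Sum.inl t := by
  rcases eq_or_ne i 0 with rfl | h0
  · simp [newPath]
  by_cases hi : i < m + 1
  · rw [dif_neg h0, dif_pos hi]
    unfold newPath
    rw [List.getElem_append_left (by simpa using hi)]
    obtain ⟨j, rfl⟩ : ∃ j, i = j + 1 := ⟨i - 1, by omega⟩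
    rw [List.getElem_cons_succ, List.getElem_map, List.getElem_finRange]
    simp [Fin.ext_iff]
  · have hi' : i = m + 1 := by omega
    rw [dif_neg h0, dif_neg hi]
    unfold newPath
    rw [List.getElem_append_right (by simp; omega)]
    simp [hi']

lemma newPath_head? (s t : V) (m : ℕ) : (newPath s t m).head? = some (Sum.inl s) := rfl

lemma newPath_getLast? (s t : V) (m : ℕ) :
    (newPath s t m).getLast? = some (Sum.inl t) := List.getLast?_concat

lemma newPath_nodup {s t : V} (hst : s ≠ t) (m : ℕ) : (newPath s t m).Nodup := by
  refine List.Nodup.append ?_ (List.nodup_singleton _) ?_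
  · rw [List.nodup_cons]
    exact ⟨by simp, (List.nodup_finRange m).map Sum.inr_injective⟩
  · intro x hx1 hx2
    simp only [List.mem_singleton] at hx2
    subst hx2
    simp only [List.mem_cons, List.mem_map] at hx1
    rcases hx1 with h | ⟨a, _, h⟩
    · exact hst (Sum.inl_injective h).symm
    · simp at h

lemma newPath_edge_inr {s t : V} {m : ℕ} (hm : 1 ≤ m) {e : (V ⊕ Fin m) × (V ⊕ Fin m)}
    (he : e ∈ edgeList (newPath s t m)) :
    (∃ x, e.1 = Sum.inr x) ∨ ∃ x, e.2 = Sum.inr x := by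
  rw [mem_edgeList] at he
  obtain ⟨i, hi, rfl⟩ := he
  rw [newPath_length] at hi
  by_cases h2 : i + 1 < m + 1
  · right
    rw [newPath_getElem s t m (i+1) (by omega)]
    rw [dif_neg (by omega), dif_pos h2]
    exact ⟨_, rfl⟩
  · left
    rw [newPath_getElem s t m i (by omega)]
    rw [dif_neg (by omega), dif_pos (by omega)]
    exact ⟨_, rfl⟩

section Aug
variable {V : Type*} [Fintype V] [DecidableEq V] {E : Set (V × V)} {s t : V}

lemma newPath_chain (E : Set (V × V)) (s t : V) (hn : 2 ≤ Fintype.card V) :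
    List.Chain' (fun x y => (x, y) ∈ augEdges E s t)
      (newPath s t (Fintype.card V - 1)) := by
  set n := Fintype.card V with hn'
  apply chain'_of_getElem
  intro i h
  rw [newPath_length] at h
  rw [newPath_getElem s t (n-1) i (by omega), newPath_getElem s t (n-1) (i+1) (by omega)]
  rcases eq_or_ne i 0 with rfl | h0
  · rw [dif_pos rfl, dif_neg (by omega), dif_pos (by omega)]
    exact Or.inr (Or.inl ⟨⟨0, by omega⟩, rfl, rfl⟩)
  by_cases hi : i + 1 < n - 1 + 1
  · rw [dif_neg h0, dif_pos (by omega), dif_neg (by omega), dif_pos hi]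
    exact Or.inr (Or.inr (Or.inl ⟨⟨i - 1, by omega⟩, ⟨i, by omega⟩, by simp; omega, rfl⟩))
  · have hieq : i = n - 1 := by omega
    rw [dif_neg h0, dif_pos (by omega), dif_neg (by omega), dif_neg (by omega)]
    exact Or.inr (Or.inr (Or.inr ⟨⟨i - 1, by omega⟩, by simp; omega, rfl⟩))

lemma newPath_isPath (hst : s ≠ t) (hn : 2 ≤ Fintype.card V) :
    IsPathOn (augEdges E s t) (Sum.inl s) (Sum.inl t)
      (newPath s t (Fintype.card V - 1)) :=
  ⟨newPath_chain E s t hn, newPath_head? s t _, newPath_getLast? s t _,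
    newPath_nodup hst _⟩

lemma length_le_card {m : ℕ} {p : List (V ⊕ Fin m)}
    (hall : ∀ x ∈ p, ∃ v, x = Sum.inl v) (hnd : p.Nodup) :
    p.length ≤ Fintype.card V := by
  classical
  have h1 : p.toFinset.card = p.length := List.toFinset_card_of_nodup hnd
  have h2 : p.toFinset ⊆ Finset.univ.image Sum.inl := by
    intro x hx
    obtain ⟨v, rfl⟩ := hall x (List.mem_toFinset.mp hx)
    exact Finset.mem_image.mpr ⟨v, Finset.mem_univ v, rfl⟩
  have h3 := Finset.card_le_card h2
  rwa [Finset.card_image_of_injective _ Sum.inl_injective, Finset.card_univ, h1] at h3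

lemma extract {p : List (V ⊕ Fin (Fintype.card V - 1))}
    (hp : IsPathOn (augEdges E s t) (Sum.inl s) (Sum.inl t) p)
    (hall : ∀ x ∈ p, ∃ v, x = Sum.inl v)
    (hlen : Fintype.card V ≤ p.length) :
    ∃ q : List V, IsPathOn E s t q ∧ q.length = Fintype.card V := by
  classical
  obtain ⟨hc, hh, hl, hnd⟩ := hp
  set f : (V ⊕ Fin (Fintype.card V - 1)) → V := Sum.elim id (fun _ => s) with hf
  have hmap : (p.map f).map Sum.inl = p := by
    rw [List.map_map]
    have : ∀ a ∈ p, (Sum.inl ∘ f) a = id a := by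
      intro a ha
      obtain ⟨v, rfl⟩ := hall a ha
      rfl
    rw [List.map_congr_left this, List.map_id]
  refine ⟨p.map f, ⟨?_, ?_, ?_, ?_⟩, ?_⟩
  · apply chain'_of_getElem
    intro i h
    rw [List.length_map] at h
    obtain ⟨a, ha⟩ := hall (p[i]'(by omega)) (List.getElem_mem _)
    obtain ⟨b, hb⟩ := hall (p[i+1]'h) (List.getElem_mem _)
    have edge := chain'_getElem hc i h
    rw [ha, hb] at edge
    simp only [augEdges, Set.mem_setOf_eq] at edge
    rcases edge with ⟨u, v, hE, heq⟩ | ⟨i0, _, heq⟩ | ⟨i0, j0, _, heq⟩ | ⟨i0, _, heq⟩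
    · rw [Prod.mk.injEq] at heq
      obtain ⟨h1, h2⟩ := heq
      obtain rfl := Sum.inl_injective h1
      obtain rfl := Sum.inl_injective h2
      simp only [List.getElem_map, ha, hb, hf]
      exact hE
    · rw [Prod.mk.injEq] at heq; exact absurd heq.2 (by simp)
    · rw [Prod.mk.injEq] at heq; exact absurd heq.1 (by simp)
    · rw [Prod.mk.injEq] at heq; exact absurd heq.1 (by simp)
  · rw [List.head?_map, hh]; rfl
  · rw [List.getLast?_map, hl]; rfl
  · rw [← hmap] at hnd
    exact List.Nodup.of_map _ hnd
  · rw [List.length_map]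
    have h1 : p.length ≤ Fintype.card V := length_le_card hall hnd
    omega

lemma classify (hst : s ≠ t) {p : List (V ⊕ Fin (Fintype.card V - 1))}
    (hp : IsPathOn (augEdges E s t) (Sum.inl s) (Sum.inl t) p) :
    (∀ x ∈ p, ∃ v, x = Sum.inl v) ∨ p = newPath s t (Fintype.card V - 1) := by
  classical
  have hnt : Nontrivial V := ⟨⟨s, t, hst⟩⟩
  have hn : 2 ≤ Fintype.card V := Fintype.one_lt_card
  obtain ⟨hc, hh, hl, hnd⟩ := hp
  obtain ⟨hpos, h0⟩ := head?_getElem hh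
  obtain ⟨hpos', hL⟩ := getLast?_getElem hl
  rcases Classical.em (∀ x ∈ p, ∃ v, x = Sum.inl v) with hall | hall
  · exact Or.inl hall
  right
  push_neg at hall
  obtain ⟨x, hxp, hx⟩ := hall
  obtain ⟨j₀, rfl⟩ : ∃ j, x = Sum.inr j := by
    cases x with
    | inl v => exact absurd rfl (hx v)
    | inr j => exact ⟨j, rfl⟩
  have claimPos : ∀ (k : ℕ) (j : Fin (Fintype.card V - 1)) (i : ℕ) (hi : i < p.length),
      j.val = k → p[i] = Sum.inr j → i = j.val + 1 := by
    intro k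
    induction k with
    | zero =>
      intro j i hi hjk hpi
      obtain ⟨i', rfl⟩ : ∃ i', i = i' + 1 := by
        rcases Nat.exists_eq_add_of_lt hpos with _
        match i, hi with
        | 0, _ => rw [h0] at hpi; simp at hpi
        | (i'+1), _ => exact ⟨i', rfl⟩
      have edge := chain'_getElem hc i' hi
      rw [hpi] at edge
      simp only [augEdges, Set.mem_setOf_eq] at edge
      rcases edge with ⟨u, v, _, heq⟩ | ⟨i0, hi0, heq⟩ | ⟨i0, j0, hj0, heq⟩ | ⟨i0, _, heq⟩ <;>
        rw [Prod.mk.injEq] at heq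
      · exact absurd heq.2 (by simp)
      · have hi'0 : i' = 0 := hnd.getElem_inj_iff.mp (heq.1.trans h0.symm)
        omega
      · obtain rfl := Sum.inr_injective heq.2
        omega
      · exact absurd heq.2 (by simp)
    | succ k ih =>
      intro j i hi hjk hpi
      obtain ⟨i', rfl⟩ : ∃ i', i = i' + 1 := by
        match i, hi with
        | 0, _ => rw [h0] at hpi; simp at hpi
        | (i'+1), _ => exact ⟨i', rfl⟩
      have edge := chain'_getElem hc i' hi
      rw [hpi] at edge
      simp only [augEdges, Set.mem_setOf_eq] at edge
      rcases edge with ⟨u, v, _, heq⟩ | ⟨i0, hi0, heq⟩ | ⟨i0, j0, hj0, heq⟩ | ⟨i0, _, heq⟩ <;>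
        rw [Prod.mk.injEq] at heq
      · exact absurd heq.2 (by simp)
      · obtain rfl := Sum.inr_injective heq.2
        omega
      · obtain rfl := Sum.inr_injective heq.2
        have hii := ih i0 i' (by omega) (by omega) heq.1
        omega
      · exact absurd heq.2 (by simp)
  have claimMem : ∀ (k : ℕ) (j : Fin (Fintype.card V - 1)), j.val = k → Sum.inr j ∈ p →
      Sum.inr (⟨0, by omega⟩ : Fin (Fintype.card V - 1)) ∈ p := by
    intro k
    induction k with
    | zero =>
      intro j hjk hjp
      have : j = ⟨0, by omega⟩ := Fin.ext hjk
      rwa [this] at hjp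
    | succ k ih =>
      intro j hjk hjp
      obtain ⟨i, hi, hpi⟩ := List.mem_iff_getElem.mp hjp
      obtain ⟨i', rfl⟩ : ∃ i', i = i' + 1 := by
        match i, hi with
        | 0, _ => rw [h0] at hpi; simp at hpi
        | (i'+1), _ => exact ⟨i', rfl⟩
      have edge := chain'_getElem hc i' hi
      rw [hpi] at edge
      simp only [augEdges, Set.mem_setOf_eq] at edge
      rcases edge with ⟨u, v, _, heq⟩ | ⟨i0, hi0, heq⟩ | ⟨i0, j0, hj0, heq⟩ | ⟨i0, _, heq⟩ <;>
        rw [Prod.mk.injEq] at heq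
      · exact absurd heq.2 (by simp)
      · obtain rfl := Sum.inr_injective heq.2
        omega
      · obtain rfl := Sum.inr_injective heq.2
        exact ih i0 (by omega) (heq.1 ▸ List.getElem_mem _)
      · exact absurd heq.2 (by simp)
  have claimUp : ∀ (j : Fin (Fintype.card V - 1)) (i : ℕ) (hi : i < p.length),
      p[i] = Sum.inr j →
      ∃ hi' : i + 1 < p.length,
        (∀ h : j.val + 1 < Fintype.card V - 1, p[i+1]'hi' = Sum.inr ⟨j.val + 1, h⟩) ∧
        (j.val = Fintype.card V - 2 → p[i+1]'hi' = Sum.inl t) := by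
    intro j i hi hpi
    have hiL : i ≠ p.length - 1 := by
      intro hh'
      subst hh'
      exact absurd (hL.symm.trans hpi) (by simp)
    have hi' : i + 1 < p.length := by omega
    have edge := chain'_getElem hc i hi'
    rw [hpi] at edge
    simp only [augEdges, Set.mem_setOf_eq] at edge
    rcases edge with ⟨u, v, _, heq⟩ | ⟨i0, hi0, heq⟩ | ⟨i0, j0, hj0, heq⟩ | ⟨i0, hi0, heq⟩ <;>
      rw [Prod.mk.injEq] at heq
    · exact absurd heq.1 (by simp)
    · exact absurd heq.1 (by simp)
    · obtain rfl := Sum.inr_injective heq.1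
      refine ⟨hi', fun h => ?_, fun h => ?_⟩
      · rw [heq.2]
        congr 1
        exact Fin.ext hj0
      · exfalso
        have := j0.isLt
        omega
    · obtain rfl := Sum.inr_injective heq.1
      refine ⟨hi', fun h => ?_, fun _ => heq.2⟩
      exfalso
      omega
  have hm0 : 0 < Fintype.card V - 1 := by omega
  have hmem0 : Sum.inr (⟨0, hm0⟩ : Fin (Fintype.card V - 1)) ∈ p := claimMem j₀.val j₀ rfl hxp
  obtain ⟨i1, hi1, hp1⟩ := List.mem_iff_getElem.mp hmem0
  have hi1eq : i1 = 1 := by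
    have := claimPos 0 ⟨0, hm0⟩ i1 hi1 rfl hp1
    simpa using this
  subst hi1eq
  have claimAll : ∀ (k : ℕ) (hk : k < Fintype.card V - 1),
      ∃ h : k + 1 < p.length, p[k+1] = Sum.inr ⟨k, hk⟩ := by
    intro k
    induction k with
    | zero => intro hk; exact ⟨hi1, hp1⟩
    | succ k ih =>
      intro hk
      obtain ⟨h1, hgk⟩ := ih (by omega)
      obtain ⟨h2, hup, -⟩ := claimUp _ _ h1 hgk
      exact ⟨h2, hup (by simpa using hk)⟩
  obtain ⟨hml, hmg⟩ := claimAll (Fintype.card V - 2) (by omega)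
  obtain ⟨hL1, -, hupt⟩ := claimUp _ _ hml hmg
  have hT : p[(Fintype.card V - 2)+1+1]'hL1 = Sum.inl t := hupt (by simp)
  have hplen : p.length = Fintype.card V + 1 := by
    have hidx : (Fintype.card V - 2)+1+1 = p.length - 1 :=
      hnd.getElem_inj_iff.mp (hT.trans hL.symm)
    omega
  apply List.ext_getElem
  · rw [hplen, newPath_length]; omega
  · intro i h1 h2
    rw [newPath_length] at h2
    rw [newPath_getElem s t (Fintype.card V - 1) i (by omega)]
    by_cases hi0 : i = 0
    · rw [dif_pos hi0]; subst hi0; exact h0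
    by_cases him : i < (Fintype.card V - 1) + 1
    · rw [dif_neg hi0, dif_pos him]
      obtain ⟨hh1, hg⟩ := claimAll (i - 1) (by omega)
      have hidx : i - 1 + 1 = i := by omega
      simp only [hidx] at hg
      exact hg
    · rw [dif_neg hi0, dif_neg him]
      have hieq : i = (Fintype.card V - 2)+1+1 := by omega
      simp only [hieq]
      exact hT

end Aug

end SD8


/-- `D` has a Hamiltonian `st`-path iff the augmented graph `D'` has two `st`-paths,
each with at most `|V|` edges, whose edge sets have symmetric difference
of size at least `2|V| − 1`. -/
theorem stmt8 {V : Type*} [Fintype V] [DecidableEq V] (E : Set (V × V)) (s t : V)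
    (hst : s ≠ t) :
    (∃ p : List V, IsPathOn E s t p ∧ p.length = Fintype.card V) ↔
    (∃ p₁ p₂ : List (V ⊕ Fin (Fintype.card V - 1)),
      IsPathOn (augEdges E s t) (Sum.inl s) (Sum.inl t) p₁ ∧
      IsPathOn (augEdges E s t) (Sum.inl s) (Sum.inl t) p₂ ∧
      p₁.length ≤ Fintype.card V + 1 ∧ p₂.length ≤ Fintype.card V + 1 ∧
      2 * Fintype.card V - 1 ≤
        ((edgeList p₁).toFinset ∆ (edgeList p₂).toFinset).card) := by
  classical
  have hnt : Nontrivial V := ⟨⟨s, t, hst⟩⟩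
  have hn : 2 ≤ Fintype.card V := Fintype.one_lt_card
  constructor
  · rintro ⟨p, ⟨hc, hh, hl, hnd⟩, hplen⟩
    refine ⟨p.map Sum.inl, SD8.newPath s t (Fintype.card V - 1),
      ⟨?_, ?_, ?_, ?_⟩, SD8.newPath_isPath hst hn, ?_, ?_, ?_⟩
    · simp only [List.Chain', List.isChain_map]
      exact hc.imp (fun {a b} hab => Or.inl ⟨a, b, hab, rfl⟩)
    · rw [List.head?_map, hh]; rfl
    · rw [List.getLast?_map, hl]; rfl
    · exact hnd.map Sum.inl_injective
    · rw [List.length_map, hplen]; omega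
    · rw [SD8.newPath_length]; omega
    · have hd : Disjoint (edgeList (p.map Sum.inl)).toFinset
          (edgeList (SD8.newPath s t (Fintype.card V - 1))).toFinset := by
        rw [Finset.disjoint_left]
        intro e he1 he2
        rw [List.mem_toFinset, SD8.edgeList_map] at he1
        rw [List.mem_toFinset] at he2
        obtain ⟨e', _, rfl⟩ := List.mem_map.mp he1
        rcases SD8.newPath_edge_inr (by omega) he2 with ⟨x, hx⟩ | ⟨x, hx⟩ <;>
          simp [Prod.map] at hx
      rw [hd.symmDiff_eq_sup, Finset.sup_eq_union, Finset.card_union_of_disjoint hd]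
      have c1 : (edgeList (p.map (Sum.inl : V → V ⊕ Fin (Fintype.card V - 1)))).toFinset.card = Fintype.card V - 1 := by
        rw [List.toFinset_card_of_nodup (SD8.edgeList_nodup (hnd.map Sum.inl_injective)),
          SD8.edgeList_length, List.length_map, hplen]
      have c2 : (edgeList (SD8.newPath s t (Fintype.card V - 1))).toFinset.card
          = Fintype.card V := by
        rw [List.toFinset_card_of_nodup (SD8.edgeList_nodup (SD8.newPath_nodup hst _)),
          SD8.edgeList_length, SD8.newPath_length]
        omega
      rw [c1, c2]
      omega
  · rintro ⟨p₁, p₂, hp₁, hp₂, hl₁, hl₂, hcard⟩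
    have hsub : ∀ a b : Finset ((V ⊕ Fin (Fintype.card V - 1)) × (V ⊕ Fin (Fintype.card V - 1))),
        (a ∆ b).card ≤ a.card + b.card := by
      intro a b
      have h1 : a ∆ b ⊆ a ∪ b := symmDiff_le_sup
      exact (Finset.card_le_card h1).trans (Finset.card_union_le a b)
    have hnew : (edgeList (SD8.newPath s t (Fintype.card V - 1))).toFinset.card
        ≤ Fintype.card V := by
      refine (List.toFinset_card_le _).trans ?_
      rw [SD8.edgeList_length, SD8.newPath_length]
      omega
    rcases SD8.classify hst hp₁ with ha₁ | he₁ <;> rcases SD8.classify hst hp₂ with ha₂ | he₂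
    · exfalso
      have b1 : (edgeList p₁).toFinset.card ≤ Fintype.card V - 1 := by
        have hq := SD8.length_le_card ha₁ hp₁.2.2.2
        refine (List.toFinset_card_le _).trans ?_
        rw [SD8.edgeList_length]; omega
      have b2 : (edgeList p₂).toFinset.card ≤ Fintype.card V - 1 := by
        have hq := SD8.length_le_card ha₂ hp₂.2.2.2
        refine (List.toFinset_card_le _).trans ?_
        rw [SD8.edgeList_length]; omega
      have := hsub (edgeList p₁).toFinset (edgeList p₂).toFinset
      omega
    · have hb2 : (edgeList p₂).toFinset.card ≤ Fintype.card V := by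
        rw [he₂]; exact hnew
      have hb1 : (edgeList p₁).toFinset.card ≤ p₁.length - 1 :=
        (List.toFinset_card_le _).trans (le_of_eq (SD8.edgeList_length _))
      have hsd := hsub (edgeList p₁).toFinset (edgeList p₂).toFinset
      have hlen : Fintype.card V ≤ p₁.length := by omega
      exact SD8.extract hp₁ ha₁ hlen
    · have hb1 : (edgeList p₁).toFinset.card ≤ Fintype.card V := by
        rw [he₁]; exact hnew
      have hb2 : (edgeList p₂).toFinset.card ≤ p₂.length - 1 :=
        (List.toFinset_card_le _).trans (le_of_eq (SD8.edgeList_length _))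
      have hsd := hsub (edgeList p₁).toFinset (edgeList p₂).toFinset
      have hlen : Fintype.card V ≤ p₂.length := by omega
      exact SD8.extract hp₂ ha₂ hlen
    · exfalso
      rw [he₁, he₂, symmDiff_self] at hcard
      simp at hcard
      omega
end
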